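/- (Local affine structure of the cost-to-Q-factor map.) Let μ be a policy, let Q* be the fixed point of the Bellman Q-operator with cost g and let Q̃* be the fixed point of the Bellman Q-operator with cost g̃ = g + h (same transition kernel p and discount factor α ∈ (0,1)). If both Q* ∈ V_μ and Q̃* ∈ V_μ, then for every (i,u) ∈ S × A, Q̃*(i,u) − Q*(i,u) = α · P_{iu}ᵀ (I − α·P_μ)^{-1} h_μ + h(i,u), where P_{iu} ∈ ℝ^S has components p(i,u,j), P_μ is the matrix with entries [P_μ]_{ij} = p(i,μ(i),j), and h_μ ∈ ℝ^S has components h(i,μ(i)). -/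

import Mathlib

open Matrix

/-- The infimum of a function over a finite type with a strict minimizer equals its value. -/
lemma iInf_eq_of_strict_min {A : Type*} [Fintype A] [Nonempty A] (f : A → ℝ) (a : A)
    (hf : ∀ u, u ≠ a → f a < f u) : (⨅ v, f v) = f a := by
  apply le_antisymm (ciInf_le (Finite.bddBelow_range f) a)
  apply le_ciInf
  intro u
  by_cases hu : u = a
  · simp [hu]
  · exact (hf u hu).le

/-- Local affine structure of the cost-to-Q-factor map: if `Q*` and `Q̃*`
are the fixed points of the Bellman Q-operators with costs `g` and `g̃ = g + h`, and both
`Q*, Q̃* ∈ V_μ`, then `Q̃*(i,u) − Q*(i,u) = α P_{iu}ᵀ (I − α P_μ)⁻¹ h_μ + h(i,u)`. -/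
theorem local_affine_structure
    {S A : Type*} [Fintype S] [Fintype A] [DecidableEq S] [Nonempty S] [Nonempty A]
    (p : S → A → S → ℝ) (hp0 : ∀ i u j, 0 ≤ p i u j) (hp1 : ∀ i u, ∑ j, p i u j = 1)
    (g h gt : S → A → ℝ) (hgt : ∀ i u, gt i u = g i u + h i u)
    (α : ℝ) (hα0 : 0 < α) (hα1 : α < 1)
    (μ : S → A)
    (Pμ : Matrix S S ℝ) (hPμ : ∀ i j, Pμ i j = p i (μ i) j)
    (hμ : S → ℝ) (hhμ : ∀ i, hμ i = h i (μ i))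
    (Qstar Qtstar : S → A → ℝ)
    (hQstar : ∀ i u, Qstar i u = g i u + α * ∑ j, p i u j * ⨅ v, Qstar j v)
    (hQtstar : ∀ i u, Qtstar i u = gt i u + α * ∑ j, p i u j * ⨅ v, Qtstar j v)
    (hmem : Qstar ∈ {Q : S → A → ℝ | ∀ i : S, ∀ u : A, u ≠ μ i → Q i (μ i) < Q i u})
    (hmem' : Qtstar ∈ {Q : S → A → ℝ | ∀ i : S, ∀ u : A, u ≠ μ i → Q i (μ i) < Q i u}) :
    ∀ i u, Qtstar i u - Qstar i u =
      α * ∑ j, p i u j * (((1 - α • Pμ)⁻¹).mulVec hμ) j + h i u := by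
  -- minima are attained at μ
  have hmin : ∀ j, (⨅ v, Qstar j v) = Qstar j (μ j) := fun j =>
    iInf_eq_of_strict_min _ _ (hmem j)
  have hmin' : ∀ j, (⨅ v, Qtstar j v) = Qtstar j (μ j) := fun j =>
    iInf_eq_of_strict_min _ _ (hmem' j)
  set D : S → ℝ := fun j => Qtstar j (μ j) - Qstar j (μ j) with hD
  have key : ∀ i u, Qtstar i u - Qstar i u = α * ∑ j, p i u j * D j + h i u := by
    intro i u
    rw [hQtstar, hQstar, hgt]
    have hs : α * ∑ j, p i u j * (⨅ v, Qtstar j v) - α * ∑ j, p i u j * (⨅ v, Qstar j v)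
        = α * ∑ j, p i u j * D j := by
      rw [← mul_sub, ← Finset.sum_sub_distrib]
      congr 1
      refine Finset.sum_congr rfl fun j _ => ?_
      rw [hmin, hmin']; simp only [hD]; ring
    linarith
  -- (1 - α Pμ) D = hμ
  have hsys : (1 - α • Pμ).mulVec D = hμ := by
    funext i
    have := key i (μ i)
    simp only [mulVec, dotProduct, Matrix.sub_apply, one_apply, Matrix.smul_apply, smul_eq_mul,
      sub_mul, Finset.sum_sub_distrib]
    simp only [ite_mul, one_mul, zero_mul, Finset.sum_ite_eq, Finset.mem_univ, if_true]
    have hsum : ∑ j, α * Pμ i j * D j = α * ∑ j, p i (μ i) j * D j := by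
      rw [Finset.mul_sum]; exact Finset.sum_congr rfl fun j _ => by rw [hPμ]; ring
    rw [hsum]
    simp only [hD] at this ⊢
    rw [hhμ]
    linarith [this]
  -- invertibility of 1 - α Pμ
  have hdet : IsUnit (1 - α • Pμ).det := by
    rw [isUnit_iff_ne_zero]
    intro hd
    obtain ⟨v, hv0, hv⟩ := (Matrix.exists_mulVec_eq_zero_iff).2 hd
    -- v = α Pμ v componentwise
    have hvc : ∀ i, v i = α * ∑ j, Pμ i j * v j := by
      intro i
      have := congrFun hv i
      simp only [mulVec, dotProduct, Matrix.sub_apply, one_apply, Matrix.smul_apply, smul_eq_mul,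
        sub_mul, Finset.sum_sub_distrib, Pi.zero_apply] at this
      simp only [ite_mul, one_mul, zero_mul, Finset.sum_ite_eq, Finset.mem_univ,
        if_true] at this
      have : v i = ∑ j, α * Pμ i j * v j := by linarith
      rw [this, Finset.mul_sum]
      exact Finset.sum_congr rfl fun j _ => by ring
    obtain ⟨i, hi⟩ := Finite.exists_max (fun i => |v i|)
    have hMpos : 0 < |v i| := by
      rcases Function.ne_iff.1 hv0 with ⟨k, hk⟩
      exact lt_of_lt_of_le (abs_pos.2 hk) (hi k)
    have hbound : |v i| ≤ α * |v i| := by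
      calc |v i| = |α * ∑ j, Pμ i j * v j| := by rw [← hvc]
        _ = α * |∑ j, Pμ i j * v j| := by rw [abs_mul, abs_of_pos hα0]
        _ ≤ α * ∑ j, |Pμ i j * v j| := by
            gcongr; exact Finset.abs_sum_le_sum_abs _ _
        _ ≤ α * ∑ j, Pμ i j * |v i| := by
            refine mul_le_mul_of_nonneg_left (Finset.sum_le_sum fun j _ => ?_) hα0.le
            have hnn : 0 ≤ Pμ i j := by rw [hPμ]; exact hp0 _ _ _
            rw [abs_mul, abs_of_nonneg hnn]
            exact mul_le_mul_of_nonneg_left (hi j) hnn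
        _ = α * |v i| := by
            rw [← Finset.sum_mul]
            have : ∑ j, Pμ i j = 1 := by
              rw [show (∑ j, Pμ i j) = ∑ j, p i (μ i) j from
                Finset.sum_congr rfl fun j _ => hPμ i j, hp1]
            rw [this, one_mul]
    nlinarith
  have hDval : D = ((1 - α • Pμ)⁻¹).mulVec hμ := by
    rw [← hsys, Matrix.mulVec_mulVec, Matrix.nonsing_inv_mul _ hdet, Matrix.one_mulVec]
  intro i u
  rw [key i u, ← hDval]
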